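/- Suppose W ∈ ℝ^{n×n} is nonzero and there exist a symmetric positive definite H and a symmetric positive semidefinite P such that for every y ∈ ℝⁿ, Wy is the minimizer over x ∈ range(W) of ‖x−y‖²_H + xᵀPx. Then W = SH for some symmetric positive semidefinite matrix S; consequently W is similar to a symmetric positive semidefinite matrix and all eigenvalues of W are real and lie in [0, 1]. -/

import Mathlib

open Matrix
open scoped MatrixOrder

section Helpers

variable {m : ℕ}

private lemma qtrick15 (a b : ℝ) (h : ∀ t : ℝ, 0 ≤ a*t^2 + 2*b*t) : b = 0 := by
  have hd := discrim_le_zero (a := a) (b := 2*b) (c := 0) (fun x => by nlinarith [h x])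
  rw [discrim] at hd
  nlinarith [sq_nonneg b]

private lemma dot_symm15 (A : Matrix (Fin m) (Fin m) ℝ) (hA : Aᵀ = A) (x y : Fin m → ℝ) :
    x ⬝ᵥ A *ᵥ y = y ⬝ᵥ A *ᵥ x := by
  rw [dotProduct_mulVec, dotProduct_comm, ← mulVec_transpose, hA]

private lemma dot_transpose15 (A : Matrix (Fin m) (Fin m) ℝ) (x y : Fin m → ℝ) :
    x ⬝ᵥ Aᵀ *ᵥ y = (A *ᵥ x) ⬝ᵥ y := by
  rw [mulVec_transpose, dotProduct_comm, ← dotProduct_mulVec, dotProduct_comm]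

private lemma expand_quad15 (A : Matrix (Fin m) (Fin m) ℝ) (hA : Aᵀ = A) (u d : Fin m → ℝ)
    (t : ℝ) :
    (u + t • d) ⬝ᵥ A *ᵥ (u + t • d) =
      u ⬝ᵥ A *ᵥ u + 2*(d ⬝ᵥ A *ᵥ u)*t + (d ⬝ᵥ A *ᵥ d)*t^2 := by
  simp only [mulVec_add, mulVec_smul, add_dotProduct, dotProduct_add, dotProduct_smul,
    smul_dotProduct, smul_eq_mul, dot_symm15 A hA u d]
  ring

private lemma zero_of_forall_dot15 (M : Matrix (Fin m) (Fin m) ℝ)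
    (h : ∀ y z : Fin m → ℝ, z ⬝ᵥ M *ᵥ y = 0) : M = 0 := by
  ext i j
  have := h (Pi.single j 1) (Pi.single i 1)
  simpa [mulVec_single, single_dotProduct] using this

private lemma psd_cs15 (A : Matrix (Fin m) (Fin m) ℝ) (hA : A.PosSemidef) (x y : Fin m → ℝ) :
    (x ⬝ᵥ A *ᵥ y)^2 ≤ (x ⬝ᵥ A *ᵥ x) * (y ⬝ᵥ A *ᵥ y) := by
  have hsym : Aᵀ = A := by
    have := hA.isHermitian; exact this
  have key : ∀ t : ℝ, 0 ≤ (y ⬝ᵥ A *ᵥ y) * (t*t) + (2*(x ⬝ᵥ A *ᵥ y)) * t + (x ⬝ᵥ A *ᵥ x) := by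
    intro t
    have h0 := hA.dotProduct_mulVec_nonneg (x + t • y)
    simp only [star_trivial] at h0
    have hx : (x + t • y) ⬝ᵥ A *ᵥ (x + t • y)
        = (y ⬝ᵥ A *ᵥ y) * (t*t) + (2*(x ⬝ᵥ A *ᵥ y)) * t + (x ⬝ᵥ A *ᵥ x) := by
      simp only [mulVec_add, mulVec_smul, add_dotProduct, dotProduct_add,
        dotProduct_smul, smul_dotProduct, smul_eq_mul, dot_symm15 A hsym y x]
      ring
    rw [hx] at h0; exact h0
  have hd := discrim_le_zero key
  rw [discrim] at hd
  nlinarith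

private lemma stationarity15 {n : ℕ} (W H P : Matrix (Fin n) (Fin n) ℝ)
    (hH : H.PosDef) (hP : P.PosSemidef)
    (hmin : ∀ y : Fin n → ℝ, ∀ x ∈ Set.range W.mulVec,
      (W.mulVec y - y) ⬝ᵥ H.mulVec (W.mulVec y - y) +
          (W.mulVec y) ⬝ᵥ P.mulVec (W.mulVec y) ≤
        (x - y) ⬝ᵥ H.mulVec (x - y) + x ⬝ᵥ P.mulVec x) :
    Wᵀ * (H + P) * W = Wᵀ * H := by
  have hHsym : Hᵀ = H := hH.isHermitian
  have hPsym : Pᵀ = P := hP.isHermitian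
  rw [← sub_eq_zero]
  apply zero_of_forall_dot15
  intro y z
  set uy := W *ᵥ y with huy
  set d := W *ᵥ z with hd
  have key : d ⬝ᵥ ((H + P) *ᵥ uy - H *ᵥ y) = 0 := by
    apply qtrick15 (d ⬝ᵥ H *ᵥ d + d ⬝ᵥ P *ᵥ d)
    intro t
    have hx := hmin y (W *ᵥ (y + t • z)) ⟨_, rfl⟩
    have hWy : W *ᵥ (y + t • z) = uy + t • d := by
      rw [mulVec_add, mulVec_smul]
    rw [hWy] at hx
    have e1 : uy + t • d - y = (uy - y) + t • d := by abel
    rw [e1, expand_quad15 H hHsym (uy - y) d t, expand_quad15 P hPsym uy d t] at hx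
    have e2 : d ⬝ᵥ ((H + P) *ᵥ uy - H *ᵥ y) = d ⬝ᵥ H *ᵥ (uy - y) + d ⬝ᵥ P *ᵥ uy := by
      simp only [add_mulVec, mulVec_sub, dotProduct_sub, dotProduct_add]
      ring
    rw [e2]
    nlinarith [hx]
  have heq : z ⬝ᵥ (Wᵀ * (H + P) * W - Wᵀ * H) *ᵥ y = d ⬝ᵥ ((H + P) *ᵥ uy - H *ᵥ y) := by
    rw [sub_mulVec, ← mulVec_mulVec, ← mulVec_mulVec, ← mulVec_mulVec,
      ← mulVec_sub, dot_transpose15]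
  rw [heq, key]

private lemma vec_eq_zero15 (a : Fin m → ℝ) (h : a ⬝ᵥ a = 0) : ∀ i, a i = 0 := by
  intro i
  have hnn : ∀ j ∈ Finset.univ, 0 ≤ a j * a j := fun j _ => mul_self_nonneg _
  have := (Finset.sum_eq_zero_iff_of_nonneg hnn).mp h i (Finset.mem_univ i)
  exact mul_self_eq_zero.mp this

private lemma antisym_sum15 (f : Fin m → Fin m → ℝ) (h : ∀ i j, f i j = - f j i) :
    ∑ i, ∑ j, f i j = 0 := by
  have h2 : (∑ i, ∑ j, f i j) = - ∑ i, ∑ j, f i j := by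
    calc ∑ i, ∑ j, f i j = ∑ i, ∑ j, (- f j i) :=
          Finset.sum_congr rfl fun i _ => Finset.sum_congr rfl fun j _ => h i j
      _ = - ∑ i, ∑ j, f j i := by simp
      _ = - ∑ j, ∑ i, f j i := by rw [Finset.sum_comm]
  linarith

private lemma dot_complex15 (M : Matrix (Fin m) (Fin m) ℝ) (hM : Mᵀ = M) (u : Fin m → ℂ) :
    star u ⬝ᵥ (M.map (algebraMap ℝ ℂ)) *ᵥ u =
      (((fun i => (u i).re) ⬝ᵥ M *ᵥ (fun i => (u i).re)
       + (fun i => (u i).im) ⬝ᵥ M *ᵥ (fun i => (u i).im) : ℝ) : ℂ) := by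
  have hsym : ∀ i j, M i j = M j i := fun i j => by
    nth_rewrite 1 [← hM]; rw [transpose_apply]
  apply Complex.ext
  · simp only [dotProduct, mulVec, Pi.star_apply, map_apply, Complex.ofReal_re,
      Complex.re_sum, Complex.mul_re, Complex.mul_im, RCLike.star_def,
      Complex.conj_re, Complex.conj_im, Complex.ofReal_im, Finset.mul_sum,
      Complex.coe_algebraMap]
    rw [← Finset.sum_add_distrib]
    refine Finset.sum_congr rfl fun i _ => ?_
    rw [← Finset.sum_add_distrib]
    refine Finset.sum_congr rfl fun j _ => ?_
    ring
  · simp only [dotProduct, mulVec, Pi.star_apply, map_apply, Complex.ofReal_im,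
      Complex.im_sum, Complex.mul_re, Complex.mul_im, RCLike.star_def,
      Complex.conj_re, Complex.conj_im, Complex.ofReal_re, Finset.mul_sum,
      Complex.coe_algebraMap]
    apply antisym_sum15
    intro i j
    rw [hsym i j]
    ring

end Helpers

theorem stmt_15 {n : ℕ} (W H P : Matrix (Fin n) (Fin n) ℝ)
    (hW0 : W ≠ 0) (hH : H.PosDef) (hP : P.PosSemidef)
    (hmin : ∀ y : Fin n → ℝ, ∀ x ∈ Set.range W.mulVec,
      (W.mulVec y - y) ⬝ᵥ H.mulVec (W.mulVec y - y) +
          (W.mulVec y) ⬝ᵥ P.mulVec (W.mulVec y) ≤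
        (x - y) ⬝ᵥ H.mulVec (x - y) + x ⬝ᵥ P.mulVec x) :
    (∃ S : Matrix (Fin n) (Fin n) ℝ, S.PosSemidef ∧ W = S * H) ∧
    (∃ B N : Matrix (Fin n) (Fin n) ℝ, IsUnit B.det ∧ N.PosSemidef ∧
      W = B * N * B⁻¹) ∧
    (∀ (lam : ℂ) (v : Fin n → ℂ), v ≠ 0 →
      (W.map (algebraMap ℝ ℂ)).mulVec v = lam • v →
      lam.im = 0 ∧ 0 ≤ lam.re ∧ lam.re ≤ 1) := by
  classical
  have hHsym : Hᵀ = H := hH.isHermitian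
  have hPsym : Pᵀ = P := hP.isHermitian
  have E : Wᵀ * (H + P) * W = Wᵀ * H := stationarity15 W H P hH hP hmin
  have hHPsd : (H + P).PosSemidef := hH.posSemidef.add hP
  have hHdet : IsUnit H.det := hH.det_pos.ne'.isUnit
  have hsymm_mid : (Wᵀ * (H + P) * W)ᵀ = Wᵀ * (H + P) * W := by
    rw [transpose_mul, transpose_mul, transpose_transpose, transpose_add, hHsym, hPsym,
      mul_assoc]
  have hHW : H * W = Wᵀ * H := by
    have h1 : (Wᵀ * H)ᵀ = H * W := by rw [transpose_mul, hHsym, transpose_transpose]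
    rw [← h1, ← E, hsymm_mid, E]
  set S := W * H⁻¹ with hS
  have hWSH : W = S * H := by rw [hS, mul_assoc, nonsing_inv_mul _ hHdet, mul_one]
  have hSeq : S = H⁻¹ * (Wᵀ * (H + P) * W) * H⁻¹ := by
    rw [E, ← hHW, nonsing_inv_mul_cancel_left _ _ hHdet]
  have hMpsd : (Wᵀ * (H + P) * W).PosSemidef := by
    have := hHPsd.conjTranspose_mul_mul_same W
    simpa [conjTranspose_eq_transpose_of_trivial] using this
  have hHinvsym : H⁻¹ᵀ = H⁻¹ := by rw [transpose_nonsing_inv, hHsym]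
  have hSpsd : S.PosSemidef := by
    have := hMpsd.conjTranspose_mul_mul_same H⁻¹
    rw [hSeq]
    simpa [conjTranspose_eq_transpose_of_trivial, hHinvsym] using this
  -- square root of H
  set R := CFC.sqrt H with hRdef
  have hRpsd : R.PosSemidef := (CFC.sqrt_nonneg H).posSemidef
  have hRsym : Rᵀ = R := by
    have := hRpsd.isHermitian
    rwa [IsHermitian, conjTranspose_eq_transpose_of_trivial] at this
  have hRR : R * R = H := CFC.sqrt_mul_sqrt_self H hH.posSemidef.nonneg
  have hRdet : IsUnit R.det := by
    have hdet : R.det * R.det = H.det := by rw [← det_mul, hRR]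
    exact isUnit_of_mul_isUnit_left (hdet ▸ hHdet)
  have hRinv_mul : R⁻¹ * R = 1 := nonsing_inv_mul _ hRdet
  have hmul_Rinv : R * R⁻¹ = 1 := mul_nonsing_inv _ hRdet
  set N := R * S * R with hN
  have hNpsd : N.PosSemidef := by
    have := hSpsd.conjTranspose_mul_mul_same R
    simpa [hN, conjTranspose_eq_transpose_of_trivial, hRsym] using this
  have hmid : R * N * R = H * W := by
    have h1 : R * N * R = (R * R) * S * (R * R) := by rw [hN]; noncomm_ring
    rw [h1, hRR, hS, ← mul_assoc, nonsing_inv_mul_cancel_right _ _ hHdet]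
  have hWRNR : W = R⁻¹ * N * R := by
    have h2 : N * R = R⁻¹ * (H * W) := by
      calc N * R = R⁻¹ * (R * N * R) := by
            simp only [← mul_assoc]; rw [hRinv_mul, one_mul]
        _ = R⁻¹ * (H * W) := by rw [hmid]
    calc W = H⁻¹ * (H * W) := by rw [← mul_assoc, nonsing_inv_mul _ hHdet, one_mul]
      _ = (R⁻¹ * R⁻¹) * (H * W) := by rw [← Matrix.mul_inv_rev, hRR]
      _ = R⁻¹ * (N * R) := by rw [h2]; exact mul_assoc _ _ _
      _ = R⁻¹ * N * R := (mul_assoc _ _ _).symm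
  have hBNB : W = R⁻¹ * N * (R⁻¹)⁻¹ := by
    rw [nonsing_inv_nonsing_inv _ hRdet]; exact hWRNR
  -- the H-quadratic-form bound:  yᵀ H W y ≤ yᵀ H y
  have claimC : ∀ y : Fin n → ℝ, y ⬝ᵥ (H * W) *ᵥ y ≤ y ⬝ᵥ H *ᵥ y := by
    intro y
    have ha : 0 ≤ (W *ᵥ y) ⬝ᵥ H *ᵥ (W *ᵥ y) := by
      have := hH.posSemidef.dotProduct_mulVec_nonneg (W *ᵥ y); simpa using this
    have hp : 0 ≤ (W *ᵥ y) ⬝ᵥ P *ᵥ (W *ᵥ y) := by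
      have := hP.dotProduct_mulVec_nonneg (W *ᵥ y); simpa using this
    have hh : 0 ≤ y ⬝ᵥ H *ᵥ y := by
      have := hH.posSemidef.dotProduct_mulVec_nonneg y; simpa using this
    have hc : y ⬝ᵥ (H * W) *ᵥ y
        = (W *ᵥ y) ⬝ᵥ H *ᵥ (W *ᵥ y) + (W *ᵥ y) ⬝ᵥ P *ᵥ (W *ᵥ y) := by
      rw [hHW, ← E, mul_assoc, ← mulVec_mulVec, dot_transpose15, ← mulVec_mulVec,
        add_mulVec, dotProduct_add]
    have hcs : (y ⬝ᵥ (H * W) *ᵥ y)^2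
        ≤ (y ⬝ᵥ H *ᵥ y) * ((W *ᵥ y) ⬝ᵥ H *ᵥ (W *ᵥ y)) := by
      have h3 := psd_cs15 H hH.posSemidef y (W *ᵥ y)
      nth_rewrite 1 [mulVec_mulVec] at h3
      exact h3
    nlinarith [hc, hcs, ha, hp, hh, mul_nonneg hh hp]
  have hINpsd : (1 - N).PosSemidef := by
    refine PosSemidef.of_dotProduct_mulVec_nonneg ?_ ?_
    · exact Matrix.isHermitian_one.sub hNpsd.isHermitian
    · intro x
      simp only [star_trivial, sub_mulVec, dotProduct_sub, one_mulVec]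
      set y := R⁻¹ *ᵥ x with hy
      have hx : x = R *ᵥ y := by rw [hy, mulVec_mulVec, hmul_Rinv, one_mulVec]
      have e2 : x ⬝ᵥ x = y ⬝ᵥ H *ᵥ y := by
        rw [hx, ← dot_transpose15, hRsym, mulVec_mulVec, hRR]
      have e1 : x ⬝ᵥ N *ᵥ x = y ⬝ᵥ (H * W) *ᵥ y := by
        rw [hx, ← dot_transpose15, hRsym, mulVec_mulVec, mulVec_mulVec, hmid]
      have := claimC y
      rw [e1, e2]
      linarith
  refine ⟨⟨S, hSpsd, hWSH⟩, ⟨R⁻¹, N, isUnit_nonsing_inv_det _ hRdet, hNpsd, hBNB⟩, ?_⟩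
  intro lam v hv hev
  have hRW : R * W = N * R := by
    rw [hWRNR, ← mul_assoc, ← mul_assoc, hmul_Rinv, one_mul]
  set f := algebraMap ℝ ℂ with hf
  set Rc := R.map f with hRc
  set Nc := N.map f with hNcdef
  have hcomm : Rc * (W.map f) = Nc * Rc := by
    rw [hRc, hNcdef, ← Matrix.map_mul, ← Matrix.map_mul, hRW]
  set u := Rc *ᵥ v with hu
  have huev : Nc *ᵥ u = lam • u := by
    rw [hu, mulVec_mulVec, ← hcomm, ← mulVec_mulVec, hev, mulVec_smul]
  have hRcdet : IsUnit Rc.det := by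
    have hdet : Rc.det = f R.det := by
      rw [hRc]; exact (RingHom.map_det f R).symm
    rw [hdet]
    exact hRdet.map f
  have hu0 : u ≠ 0 := by
    intro h0
    apply hv
    have hvv : Rc⁻¹ *ᵥ u = v := by
      rw [hu, mulVec_mulVec, nonsing_inv_mul _ hRcdet, one_mulVec]
    rw [← hvv, h0, mulVec_zero]
  have hNsym : Nᵀ = N := by
    have := hNpsd.isHermitian
    rwa [IsHermitian, conjTranspose_eq_transpose_of_trivial] at this
  set a : Fin n → ℝ := fun i => (u i).re with ha
  set b : Fin n → ℝ := fun i => (u i).im with hb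
  have hq := dot_complex15 N hNsym u
  have hs := dot_complex15 (1 : Matrix (Fin n) (Fin n) ℝ) (by simp) u
  rw [show ((1 : Matrix (Fin n) (Fin n) ℝ)).map f = 1 from
      Matrix.map_one f (map_zero f) (map_one f), one_mulVec, one_mulVec, one_mulVec] at hs
  rw [← ha, ← hb] at hq hs
  set qa := a ⬝ᵥ N *ᵥ a + b ⬝ᵥ N *ᵥ b with hqa
  set qs := a ⬝ᵥ a + b ⬝ᵥ b with hqs
  have hqa0 : 0 ≤ qa := by
    have h1 := hNpsd.dotProduct_mulVec_nonneg a
    have h2 := hNpsd.dotProduct_mulVec_nonneg b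
    simp only [star_trivial] at h1 h2
    exact add_nonneg h1 h2
  have hqale : qa ≤ qs := by
    have h1 := hINpsd.dotProduct_mulVec_nonneg a
    have h2 := hINpsd.dotProduct_mulVec_nonneg b
    simp only [star_trivial, sub_mulVec, one_mulVec, dotProduct_sub] at h1 h2
    rw [hqa, hqs]
    linarith
  have hqs0 : 0 < qs := by
    rcases eq_or_lt_of_le (le_trans hqa0 hqale) with h|h
    · exfalso
      apply hu0
      have h1 : 0 ≤ a ⬝ᵥ a := Finset.sum_nonneg fun j _ => mul_self_nonneg _
      have h2 : 0 ≤ b ⬝ᵥ b := Finset.sum_nonneg fun j _ => mul_self_nonneg _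
      rw [hqs] at h
      have haa := vec_eq_zero15 a (by linarith)
      have hbb := vec_eq_zero15 b (by linarith)
      funext i
      exact Complex.ext (haa i) (hbb i)
    · exact h
  have heq : (qa : ℂ) = lam * (qs : ℂ) := by
    have hthis : star u ⬝ᵥ (Nc *ᵥ u) = lam * (star u ⬝ᵥ u) := by
      rw [huev, dotProduct_smul, smul_eq_mul]
    rw [hq, hs] at hthis
    exact hthis
  have hqsC : (qs : ℂ) ≠ 0 := Complex.ofReal_ne_zero.mpr hqs0.ne'
  have hlam : lam = ((qa / qs : ℝ) : ℂ) := by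
    rw [Complex.ofReal_div, eq_div_iff hqsC, ← heq]
  refine ⟨?_, ?_, ?_⟩
  · rw [hlam]; exact Complex.ofReal_im _
  · rw [hlam, Complex.ofReal_re]; exact div_nonneg hqa0 hqs0.le
  · rw [hlam, Complex.ofReal_re]; exact (div_le_one hqs0).mpr hqale
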